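/- Let d ≥ 1 and n ≥ 1 be integers. Call two points λ, μ ∈ ℤᵈ nearest neighbors if ∑ᵢ |λᵢ − μᵢ| = 1. Let Λ₀ ⊆ ℤᵈ be a finite set with L₀ = |Λ₀| elements. Then the set of all sequences ((λ′₁, λ″₁), …, (λ′ₙ, λ″ₙ)) of ordered pairs of nearest neighbors in ℤᵈ satisfying the growth condition — namely, setting S₀ = Λ₀ and Sⱼ = Sⱼ₋₁ ∪ {λ′ⱼ, λ″ⱼ}, one requires λ′ⱼ ∈ Sⱼ₋₁ or λ″ⱼ ∈ Sⱼ₋₁ for every j ∈ {1, …, n} — is finite, and its cardinality is at most 2^{(d+1)n} · L₀ (L₀ + 1) ⋯ (L₀ + n − 1). -/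

import Mathlib

open Finset

namespace Stmt3Aux

variable {d n : ℕ} (Λ₀ : Finset (Fin d → ℤ))

def prev (p : Fin n → (Fin d → ℤ) × (Fin d → ℤ)) (j : Fin n) : Set (Fin d → ℤ) :=
  ↑Λ₀ ∪ {x | ∃ i : Fin n, i < j ∧ (x = (p i).1 ∨ x = (p i).2)}

def Good (p : Fin n → (Fin d → ℤ) × (Fin d → ℤ)) : Prop :=
  (∀ j : Fin n, (∑ i, |(p j).1 i - (p j).2 i|) = 1) ∧
  ∀ j : Fin n, (p j).1 ∈ prev Λ₀ p j ∨ (p j).2 ∈ prev Λ₀ p j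

open Classical in
noncomputable def bb (p : Fin n → (Fin d → ℤ) × (Fin d → ℤ)) (j : Fin n) : Bool :=
  decide ((p j).1 ∈ prev Λ₀ p j)

noncomputable def old (p : Fin n → (Fin d → ℤ) × (Fin d → ℤ)) (j : Fin n) : Fin d → ℤ :=
  if bb Λ₀ p j then (p j).1 else (p j).2

noncomputable def nw (p : Fin n → (Fin d → ℤ) × (Fin d → ℤ)) (j : Fin n) : Fin d → ℤ :=
  if bb Λ₀ p j then (p j).2 else (p j).1

lemma recon (p : Fin n → (Fin d → ℤ) × (Fin d → ℤ)) (j : Fin n) :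
    p j = if bb Λ₀ p j then (old Λ₀ p j, nw Λ₀ p j) else (nw Λ₀ p j, old Λ₀ p j) := by
  unfold old nw; by_cases h : bb Λ₀ p j <;> simp [h]

lemma old_mem {p : Fin n → (Fin d → ℤ) × (Fin d → ℤ)} (hp : Good Λ₀ p) (j : Fin n) :
    old Λ₀ p j ∈ prev Λ₀ p j := by
  unfold old bb
  by_cases h : (p j).1 ∈ prev Λ₀ p j
  · simp [h]
  · have := hp.2 j
    simp only [h, false_or] at this
    classical simp [h, this]

lemma unit_vec (v : Fin d → ℤ) (hv : (∑ i, |v i|) = 1) :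
    ∃ z : Fin d × Bool, v = Pi.single z.1 (if z.2 then (1:ℤ) else -1) := by
  have hnz : ∃ i₀, v i₀ ≠ 0 := by
    by_contra h
    push_neg at h
    simp [h] at hv
  obtain ⟨i₀, hi₀⟩ := hnz
  have hsplit : |v i₀| + ∑ i ∈ univ.erase i₀, |v i| = 1 := by
    rw [← hv]; exact Finset.add_sum_erase univ (fun i => |v i|) (mem_univ i₀)
  have h1 : 1 ≤ |v i₀| := Int.one_le_abs hi₀
  have hrestnn : 0 ≤ ∑ i ∈ univ.erase i₀, |v i| :=
    Finset.sum_nonneg fun i _ => abs_nonneg _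
  have hrest : ∑ i ∈ univ.erase i₀, |v i| = 0 := by omega
  have hzero : ∀ i ∈ univ.erase i₀, |v i| = 0 :=
    (Finset.sum_eq_zero_iff_of_nonneg fun i _ => abs_nonneg _).mp hrest
  have habs : |v i₀| = 1 := by omega
  refine ⟨(i₀, if v i₀ = 1 then true else false), funext fun k => ?_⟩
  by_cases hk : k = i₀
  · subst hk
    rcases abs_eq (by norm_num : (0:ℤ) ≤ 1) |>.mp habs with h | h <;> simp [h]
  · have : |v k| = 0 := hzero k (by simp [hk])
    have : v k = 0 := abs_eq_zero.mp this
    simp [this, Pi.single_eq_of_ne hk]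

lemma dir_ex {p : Fin n → (Fin d → ℤ) × (Fin d → ℤ)} (hp : Good Λ₀ p) (j : Fin n) :
    ∃ z : Fin d × Bool,
      (fun i => nw Λ₀ p j i - old Λ₀ p j i) = Pi.single z.1 (if z.2 then (1:ℤ) else -1) := by
  apply unit_vec
  have h := hp.1 j
  unfold nw old
  by_cases hb : bb Λ₀ p j
  · simp only [hb, if_true]
    rw [← h]; exact Finset.sum_congr rfl fun i _ => abs_sub_comm _ _
  · simp only [hb, if_false]; exact h

lemma pair_cases {p : Fin n → (Fin d → ℤ) × (Fin d → ℤ)} {j : Fin n} {x : Fin d → ℤ}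
    (hx : x = (p j).1 ∨ x = (p j).2) (hne : x ≠ old Λ₀ p j) : x = nw Λ₀ p j := by
  unfold old nw at *
  by_cases hb : bb Λ₀ p j <;> simp [hb] at hne ⊢ <;> tauto

lemma exists_src {p : Fin n → (Fin d → ℤ) × (Fin d → ℤ)} (hp : Good Λ₀ p) (j : Fin n)
    (h : old Λ₀ p j ∉ Λ₀) : ∃ i : Fin n, i < j ∧ old Λ₀ p j = nw Λ₀ p i := by
  set x := old Λ₀ p j with hx
  have hm : x ∈ prev Λ₀ p j := old_mem Λ₀ hp j
  have hm' : ∃ i : Fin n, i < j ∧ (x = (p i).1 ∨ x = (p i).2) := by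
    rcases hm with hm | hm
    · exact absurd hm h
    · exact hm
  classical
  set T : Finset (Fin n) := univ.filter (fun i => i < j ∧ (x = (p i).1 ∨ x = (p i).2)) with hT
  have hne : T.Nonempty := by
    obtain ⟨i, hi⟩ := hm'
    exact ⟨i, by simp [hT, hi.1, hi.2]⟩
  set i := T.min' hne with hi
  have hiT : i ∈ T := T.min'_mem hne
  simp only [hT, mem_filter, mem_univ, true_and] at hiT
  refine ⟨i, hiT.1, ?_⟩
  apply pair_cases Λ₀ hiT.2
  intro hxo
  have hoi : old Λ₀ p i ∈ prev Λ₀ p i := old_mem Λ₀ hp i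
  rw [← hxo] at hoi
  rcases hoi with hoi | hoi
  · exact h hoi
  · obtain ⟨k, hk, hk2⟩ := hoi
    have hkT : k ∈ T := by
      simp only [hT, mem_filter, mem_univ, true_and]
      exact ⟨lt_trans hk hiT.1, hk2⟩
    have := T.min'_le k hkT
    rw [← hi] at this
    exact absurd (lt_of_lt_of_le hk this) (lt_irrefl k)

open Classical in
noncomputable def encode (p : Fin n → (Fin d → ℤ) × (Fin d → ℤ)) (hp : Good Λ₀ p) :
    ∀ j : Fin n, (Bool × (Fin d × Bool)) × ({x // x ∈ Λ₀} ⊕ Fin j.val) :=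
  fun j =>
    ((bb Λ₀ p j, Classical.choose (dir_ex Λ₀ hp j)),
     if h : old Λ₀ p j ∈ Λ₀ then Sum.inl ⟨_, h⟩
     else Sum.inr ⟨(Classical.choose (exists_src Λ₀ hp j h)).val,
       (Classical.choose_spec (exists_src Λ₀ hp j h)).1⟩)

lemma encode_inj {p q : Fin n → (Fin d → ℤ) × (Fin d → ℤ)} (hp : Good Λ₀ p) (hq : Good Λ₀ q)
    (h : encode Λ₀ p hp = encode Λ₀ q hq) : p = q := by
  have key : ∀ m : ℕ, ∀ j : Fin n, j.val = m → p j = q j := by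
    intro m
    induction m using Nat.strong_induction_on with
    | _ m IH =>
      intro j hj
      have IH' : ∀ i : Fin n, i < j → p i = q i := fun i hi =>
        IH i.val (hj ▸ hi) i rfl
      have hcj := congrFun h j
      have hb : bb Λ₀ p j = bb Λ₀ q j := congrArg (fun z => z.1.1) hcj
      have hdir : Classical.choose (dir_ex Λ₀ hp j) = Classical.choose (dir_ex Λ₀ hq j) :=
        congrArg (fun z => z.1.2) hcj
      have hidx := congrArg Prod.snd hcj
      have hbb_lt : ∀ i : Fin n, i < j → bb Λ₀ p i = bb Λ₀ q i := fun i hi =>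
        congrArg (fun z => z.1.1) (congrFun h i)
      have hnw_lt : ∀ i : Fin n, i < j → nw Λ₀ p i = nw Λ₀ q i := by
        intro i hi
        unfold nw
        rw [hbb_lt i hi, IH' i hi]
      have hold : old Λ₀ p j = old Λ₀ q j := by
        simp only [encode] at hidx
        by_cases h1 : old Λ₀ p j ∈ Λ₀ <;> by_cases h2 : old Λ₀ q j ∈ Λ₀ <;>
          simp only [h1, h2, dif_pos, dif_neg, not_false_iff] at hidx
        · exact congrArg Subtype.val (Sum.inl.inj hidx)
        · exact absurd hidx (by simp)
        · exact absurd hidx (by simp)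
        · have hval := congrArg Fin.val (Sum.inr.inj hidx)
          set ip := Classical.choose (exists_src Λ₀ hp j h1) with hip
          set iq := Classical.choose (exists_src Λ₀ hq j h2) with hiq
          have hieq : ip = iq := Fin.ext hval
          have hsp := (Classical.choose_spec (exists_src Λ₀ hp j h1))
          have hsq := (Classical.choose_spec (exists_src Λ₀ hq j h2))
          rw [← hip] at hsp; rw [← hiq] at hsq
          rw [hsp.2, hsq.2, ← hieq]
          exact hnw_lt ip hsp.1
      have hnwj : nw Λ₀ p j = nw Λ₀ q j := by
        have hsp := Classical.choose_spec (dir_ex Λ₀ hp j)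
        have hsq := Classical.choose_spec (dir_ex Λ₀ hq j)
        rw [hdir] at hsp
        have hdiff : (fun i => nw Λ₀ p j i - old Λ₀ p j i)
            = (fun i => nw Λ₀ q j i - old Λ₀ q j i) := hsp.trans hsq.symm
        funext k
        have := congrFun hdiff k
        have ho := congrFun hold k
        omega
      rw [recon Λ₀ p j, recon Λ₀ q j, hb, hold, hnwj]
  funext j
  exact key j.val j rfl

end Stmt3Aux

/-- The counting bound from the proof of Lemma 3.2(ii): the number of sequences of `n`
ordered nearest-neighbor pairs in `ℤᵈ`, each touching the region generated by a finite
set `Λ₀` and the previously chosen pairs, is at most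
`2^{(d+1)n} · L₀(L₀+1)⋯(L₀+n−1)`. -/
theorem stmt3 (d n : ℕ) (hd : 1 ≤ d) (hn : 1 ≤ n) (Λ₀ : Finset (Fin d → ℤ)) :
    (({p | (∀ j : Fin n, (∑ i, |(p j).1 i - (p j).2 i|) = 1) ∧
        (∀ j : Fin n,
          (p j).1 ∈ (↑Λ₀ ∪
              {x | ∃ i : Fin n, i < j ∧ (x = (p i).1 ∨ x = (p i).2)} : Set (Fin d → ℤ)) ∨
          (p j).2 ∈ (↑Λ₀ ∪
              {x | ∃ i : Fin n, i < j ∧ (x = (p i).1 ∨ x = (p i).2)} : Set (Fin d → ℤ)))} :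
        Set (Fin n → (Fin d → ℤ) × (Fin d → ℤ))).Finite) ∧
    Nat.card ({p | (∀ j : Fin n, (∑ i, |(p j).1 i - (p j).2 i|) = 1) ∧
        (∀ j : Fin n,
          (p j).1 ∈ (↑Λ₀ ∪
              {x | ∃ i : Fin n, i < j ∧ (x = (p i).1 ∨ x = (p i).2)} : Set (Fin d → ℤ)) ∨
          (p j).2 ∈ (↑Λ₀ ∪
              {x | ∃ i : Fin n, i < j ∧ (x = (p i).1 ∨ x = (p i).2)} : Set (Fin d → ℤ)))} :
        Set (Fin n → (Fin d → ℤ) × (Fin d → ℤ)))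
      ≤ 2 ^ ((d + 1) * n) * ∏ i ∈ Finset.range n, (Λ₀.card + i) := by
  classical
  set S : Set (Fin n → (Fin d → ℤ) × (Fin d → ℤ)) :=
    {p | Stmt3Aux.Good Λ₀ p} with hS
  have hgood : ∀ p ∈ S, Stmt3Aux.Good Λ₀ p := fun p hp => hp
  have hinj : Function.Injective
      (fun x : S => Stmt3Aux.encode Λ₀ x.1 x.2) := by
    intro a b hab
    exact Subtype.ext (Stmt3Aux.encode_inj Λ₀ a.2 b.2 hab)
  have hfin : Finite ↥S := Finite.of_injective _ hinj
  constructor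
  · exact Set.finite_coe_iff.mp hfin
  · have hle : Nat.card ↥S
        ≤ Nat.card (∀ j : Fin n, (Bool × (Fin d × Bool)) × ({x // x ∈ Λ₀} ⊕ Fin j.val)) :=
      Nat.card_le_card_of_injective _ hinj
    have hcardC : Nat.card (∀ j : Fin n, (Bool × (Fin d × Bool)) × ({x // x ∈ Λ₀} ⊕ Fin j.val))
        = ∏ j : Fin n, (2 * (d * 2)) * (Λ₀.card + j.val) := by
      rw [Nat.card_eq_fintype_card, Fintype.card_pi]
      refine Finset.prod_congr rfl fun j _ => ?_
      simp [mul_comm]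
    have hbound : ∏ j : Fin n, (2 * (d * 2)) * (Λ₀.card + j.val)
        ≤ 2 ^ ((d + 1) * n) * ∏ i ∈ Finset.range n, (Λ₀.card + i) := by
      rw [Fin.prod_univ_eq_prod_range (fun i => (2 * (d * 2)) * (Λ₀.card + i)) n,
        Finset.prod_mul_distrib, Finset.prod_const, Finset.card_range]
      have h1 : d ≤ 2 ^ (d - 1) := by
        have := Nat.lt_two_pow_self (n := d - 1)
        omega
      have h2 : 2 ^ (d + 1) = 4 * 2 ^ (d - 1) := by
        rw [show d + 1 = 2 + (d - 1) by omega, pow_add]; norm_num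
      have h3 : 2 * (d * 2) ≤ 2 ^ (d + 1) := by omega
      have h4 : (2 * (d * 2)) ^ n ≤ (2 ^ (d + 1)) ^ n := Nat.pow_le_pow_left h3 n
      rw [← pow_mul] at h4
      exact Nat.mul_le_mul_right _ h4
    calc Nat.card ↥S ≤ _ := hle
      _ = _ := hcardC
      _ ≤ _ := hbound
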